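/- Let p be a prime with p ∉ {2, 3}, k ≥ 1, b a positive integer with gcd(b·pᵏ, 6) = 1 and gcd(b, p) = 1, and n ≥ 1. Let γ = (γ₁, γ₂) : ℤ/b × T*ₙ → (ℤ/pᵏ)ˣ be a homomorphism whose restriction γ₂ to the factor T*ₙ is trivial (resp. let τ = (τ₁, τ₂) : ℤ/b × O*ₙ → (ℤ/pᵏ)ˣ be a homomorphism whose restriction τ₂ to the factor O*ₙ is trivial). Then restriction of crossed homomorphisms along the inclusion ℤ/b ↪ ℤ/b × T*ₙ induces an isomorphism Der_γ(ℤ/b × T*ₙ, ℤ/pᵏ) ≅ Der_{γ₁}(ℤ/b, ℤ/pᵏ) (resp. restriction along ℤ/b ↪ ℤ/b × O*ₙ induces an isomorphism Der_τ(ℤ/b × O*ₙ, ℤ/pᵏ) ≅ Der_{τ₁}(ℤ/b, ℤ/pᵏ)). -/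

import Mathlib

/-- The quaternion group of order 8, with `i = a 1`, `j = xa 0`, `k = i * j = xa 3`. -/
abbrev Q8 := QuaternionGroup 2

/-- The underlying function of the automorphism of `Q₈` sending `i ↦ j`, `j ↦ k`, `k ↦ i`. -/
def tauFun : Q8 → Q8
  | .a i => if i = 0 then .a 0 else if i = 1 then .xa 0 else if i = 2 then .a 2 else .xa 2
  | .xa i => if i = 0 then .xa 3 else if i = 1 then .a 3 else if i = 2 then .xa 1 else .a 1

/-- The inverse function, sending `i ↦ k`, `j ↦ i`, `k ↦ j`. -/
def tauInvFun : Q8 → Q8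
  | .a i => if i = 0 then .a 0 else if i = 1 then .xa 3 else if i = 2 then .a 2 else .xa 1
  | .xa i => if i = 0 then .a 1 else if i = 1 then .xa 2 else if i = 2 then .a 3 else .xa 0

/-- The automorphism `τ` of `Q₈` with `τ i = j`, `τ j = k`, `τ k = i`. -/
def tau : MulAut Q8 :=
  { toFun := tauFun
    invFun := tauInvFun
    left_inv := by decide
    right_inv := by decide
    map_mul' := by decide }

theorem tau_pow_three : tau ^ 3 = 1 :=
  DFunLike.ext _ _ (by decide)

/-- The action `α : ℤ/3 → Aut Q₈` sending the generator `1` of `ℤ/3` to `τ`. -/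
def alphaQ8 : Multiplicative (ZMod 3) →* MulAut Q8 :=
  AddMonoidHom.toMultiplicativeLeft
    (ZMod.lift 3 ⟨zmultiplesHom (Additive (MulAut Q8)) (Additive.ofMul tau), by
      show ((3 : ℕ) : ℤ) • Additive.ofMul tau = 0
      have h3 : tau ^ ((3 : ℕ) : ℤ) = 1 := by rw [zpow_natCast, tau_pow_three]
      rw [← ofMul_zpow, h3, ofMul_one]⟩)

/-- The reduction map `ℤ/3ⁿ → ℤ/3` (junk when `n = 0`). -/
def redMod3 (n : ℕ) : ZMod (3 ^ n) →+ ZMod 3 :=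
  if h : n = 0 then 0
  else (ZMod.castHom (dvd_pow_self 3 h) (ZMod 3)).toAddMonoidHom

/-- The action `αₙ : ℤ/3ⁿ → Aut Q₈`, the composite of the reduction map `ℤ/3ⁿ → ℤ/3`
with `α`. -/
def alphaQ8n (n : ℕ) : Multiplicative (ZMod (3 ^ n)) →* MulAut Q8 :=
  alphaQ8.comp (AddMonoidHom.toMultiplicative (redMod3 n))

/-- The generalized binary tetrahedral group `T*ₙ = Q₈ ⋊_{αₙ} ℤ/3ⁿ`. -/
abbrev Tstar (n : ℕ) := Q8 ⋊[alphaQ8n n] Multiplicative (ZMod (3 ^ n))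


/-- Generators `X, P, Q, R` of the generalized binary octahedral group. -/
inductive OGen : Type
  | X : OGen
  | P : OGen
  | Q : OGen
  | R : OGen
  deriving DecidableEq

open OGen FreeGroup in
/-- The relations of the generalized binary octahedral group `O*ₙ`:
`X^(3^n) = P⁴ = 1`, `P² = Q² = R²`, `PQP⁻¹ = Q⁻¹`, `XPX⁻¹ = Q`, `XQX⁻¹ = PQ`,
`RXR⁻¹ = X⁻¹`, `RPR⁻¹ = QP`, `RQR⁻¹ = Q⁻¹`. -/
def ostarRels (n : ℕ) : Set (FreeGroup OGen) :=
  { of X ^ 3 ^ n,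
    of P ^ 4,
    of P ^ 2 * (of Q ^ 2)⁻¹,
    of Q ^ 2 * (of R ^ 2)⁻¹,
    of P * of Q * (of P)⁻¹ * of Q,
    of X * of P * (of X)⁻¹ * (of Q)⁻¹,
    of X * of Q * (of X)⁻¹ * (of P * of Q)⁻¹,
    of R * of X * (of R)⁻¹ * of X,
    of R * of P * (of R)⁻¹ * (of Q * of P)⁻¹,
    of R * of Q * (of R)⁻¹ * of Q }

/-- The generalized binary octahedral group `O*ₙ`, given by the presentation above. -/
abbrev Ostar (n : ℕ) := PresentedGroup (ostarRels n)


/-- For an action `α : H → Aut A` of a group `H` on an additive abelian group `A`,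
`Der α` is the abelian group (under pointwise addition) of crossed homomorphisms
`d : H → A`, i.e. maps satisfying `d (h₁ * h₂) = d h₁ + α h₁ (d h₂)`. -/
def Der {H A : Type*} [Group H] [AddCommGroup A] (α : H →* Multiplicative (AddAut A)) :
    AddSubgroup (H → A) where
  carrier := {d | ∀ h₁ h₂ : H, d (h₁ * h₂) = d h₁ + Multiplicative.toAdd (α h₁) (d h₂)}
  zero_mem' := by intro h₁ h₂; simp
  add_mem' := by
    intro d₁ d₂ hd₁ hd₂ h₁ h₂
    simp only [Pi.add_apply, hd₁ h₁ h₂, hd₂ h₁ h₂, map_add]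
    abel
  neg_mem' := by
    intro d hd h₁ h₂
    simp only [Pi.neg_apply, hd h₁ h₂, map_neg]
    abel

/-- A homomorphism `γ : H → (ℤ/a)ˣ` regarded as an action of `H` on `ℤ/a`
by multiplication. -/
def unitsAction {H : Type*} [Group H] {a : ℕ} (γ : H →* (ZMod a)ˣ) :
    H →* Multiplicative (AddAut (ZMod a)) :=
  (DistribMulAction.toAddAut (ZMod a)ˣ (ZMod a)).comp γ

section Aux

/-- Torsion in `Multiplicative (ZMod a)` coprime to `a` is trivial. -/
theorem mult_eq_one_of_pow {a m : ℕ} [NeZero a] (hcop : Nat.Coprime m a)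
    (u : Multiplicative (ZMod a)) (hu : u ^ m = 1) : u = 1 := by
  have h : m • u.toAdd = 0 := by rw [← toAdd_pow, hu]; rfl
  rw [nsmul_eq_mul] at h
  have hu' : IsUnit ((m : ZMod a)) := (ZMod.isUnit_iff_coprime m a).mpr hcop
  have h0 : u.toAdd = 0 := (hu'.mul_right_eq_zero).mp h
  simpa using congrArg Multiplicative.ofAdd h0

variable {G₁ G₂ : Type*} [Group G₁] [Group G₂] {a : ℕ}

/-- The restriction of a derivation to the second factor, as a monoid hom, when the
action is trivial on the second factor. -/
theorem exists_psi (γ : G₁ × G₂ →* (ZMod a)ˣ) (hγ₂ : ∀ t : G₂, γ (1, t) = 1)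
    (d : Der (unitsAction γ)) :
    ∃ ψ : G₂ →* Multiplicative (ZMod a),
      ∀ t, (ψ t).toAdd = (d : G₁ × G₂ → ZMod a) (1, t) := by
  have h1 : (d : G₁ × G₂ → ZMod a) 1 = 0 := by
    have h := d.2 1 1
    simp only [mul_one, unitsAction, MonoidHom.comp_apply, map_one, AddAut.one_apply] at h
    exact (left_eq_add.mp h)
  have hadd : ∀ t₁ t₂ : G₂, (d : G₁ × G₂ → ZMod a) (1, t₁ * t₂) =
      (d : G₁ × G₂ → ZMod a) (1, t₁) + (d : G₁ × G₂ → ZMod a) (1, t₂) := by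
    intro t₁ t₂
    have hm : ((1 : G₁), t₁ * t₂) = (1, t₁) * (1, t₂) := by simp
    have := d.2 (1, t₁) (1, t₂)
    rw [← hm] at this
    have h1s : ∀ x : ZMod a, Multiplicative.toAdd (DistribMulAction.toAddEquiv (ZMod a) (1 : (ZMod a)ˣ)) x = x :=
      fun x => one_smul (ZMod a)ˣ x
    simpa [unitsAction, hγ₂, h1s] using this
  refine ⟨{ toFun := fun t => Multiplicative.ofAdd ((d : G₁ × G₂ → ZMod a) (1, t))
            map_one' := by simpa using congrArg Multiplicative.ofAdd (show (d : G₁ × G₂ → ZMod a) (1, 1) = 0 from h1)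
            map_mul' := fun t₁ t₂ => by
              simpa using congrArg Multiplicative.ofAdd (hadd t₁ t₂) }, fun t => rfl⟩

/-- The generic restriction isomorphism, given vanishing on the second factor. -/
theorem der_iso_of_trivial (γ : G₁ × G₂ →* (ZMod a)ˣ) (hγ₂ : ∀ t : G₂, γ (1, t) = 1)
    (hd0 : ∀ d : Der (unitsAction γ), ∀ t : G₂, (d : G₁ × G₂ → ZMod a) (1, t) = 0) :
    ∃ e : Der (unitsAction γ) ≃+ Der (unitsAction (γ.comp (MonoidHom.inl G₁ G₂))),
      ∀ d z, (e d : G₁ → ZMod a) z = (d : G₁ × G₂ → ZMod a) (z, 1) := by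
  have hfst : ∀ (z : G₁) (t : G₂), γ (z, t) = γ (z, 1) := by
    intro z t
    have hm : ((z, t) : G₁ × G₂) = (z, 1) * (1, t) := by simp
    rw [hm, map_mul, hγ₂, mul_one]
  have hext : ∀ (d : Der (unitsAction γ)) (z : G₁) (t : G₂),
      (d : G₁ × G₂ → ZMod a) (z, t) = (d : G₁ × G₂ → ZMod a) (z, 1) := by
    intro d z t
    have hm : ((z, t) : G₁ × G₂) = (z, 1) * (1, t) := by simp
    rw [hm, d.2 (z, 1) (1, t), hd0 d t]
    simp
  refine ⟨{ toFun := fun d => ⟨fun z => (d : G₁ × G₂ → ZMod a) (z, 1), ?_⟩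
            invFun := fun e => ⟨fun zt => (e : G₁ → ZMod a) zt.1, ?_⟩
            left_inv := ?_
            right_inv := ?_
            map_add' := ?_ }, fun d z => rfl⟩
  · intro z₁ z₂
    have := d.2 (z₁, 1) (z₂, 1)
    have hm : ((z₁, 1) : G₁ × G₂) * (z₂, 1) = (z₁ * z₂, 1) := by simp
    rw [hm] at this
    simpa [unitsAction] using this
  · intro h₁ h₂
    have := e.2 h₁.1 h₂.1
    simpa [unitsAction, hfst h₁.1 h₁.2] using this
  · intro d
    ext zt
    exact (hext d zt.1 zt.2).symm.trans (by rfl)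
  · intro e
    ext z
    rfl
  · intro d₁ d₂
    rfl

end Aux

/-- Let p ∉ {2,3} be a prime, k ≥ 1, b with gcd(b·pᵏ,6) = 1 and gcd(b,p) = 1, n ≥ 1.
If γ : ℤ/b × T*ₙ → (ℤ/pᵏ)ˣ restricts trivially to T*ₙ (resp. τ : ℤ/b × O*ₙ → (ℤ/pᵏ)ˣ
restricts trivially to O*ₙ), then restriction of crossed homomorphisms along the inclusion
of ℤ/b induces an isomorphism Der_γ(ℤ/b × T*ₙ, ℤ/pᵏ) ≅ Der_{γ₁}(ℤ/b, ℤ/pᵏ)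
(resp. Der_τ(ℤ/b × O*ₙ, ℤ/pᵏ) ≅ Der_{τ₁}(ℤ/b, ℤ/pᵏ)). -/
theorem der_restrict_iso_of_trivial (p : ℕ) (hp : p.Prime) (hp2 : p ≠ 2) (hp3 : p ≠ 3)
    (k : ℕ) (hk : 1 ≤ k) (b : ℕ) (hb : 0 < b) (h6 : Nat.gcd (b * p ^ k) 6 = 1)
    (hbp : Nat.Coprime b p) (n : ℕ) (hn : 1 ≤ n)
    (γ : Multiplicative (ZMod b) × Tstar n →* (ZMod (p ^ k))ˣ)
    (hγ₂ : ∀ t : Tstar n, γ (1, t) = 1)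
    (τ : Multiplicative (ZMod b) × Ostar n →* (ZMod (p ^ k))ˣ)
    (hτ₂ : ∀ t : Ostar n, τ (1, t) = 1) :
    (∃ e : Der (unitsAction γ) ≃+
        Der (unitsAction (γ.comp (MonoidHom.inl (Multiplicative (ZMod b)) (Tstar n)))),
      ∀ (d : Der (unitsAction γ)) (z : Multiplicative (ZMod b)),
        (e d : Multiplicative (ZMod b) → ZMod (p ^ k)) z =
          (d : Multiplicative (ZMod b) × Tstar n → ZMod (p ^ k)) (z, 1)) ∧
    (∃ e : Der (unitsAction τ) ≃+
        Der (unitsAction (τ.comp (MonoidHom.inl (Multiplicative (ZMod b)) (Ostar n)))),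
      ∀ (d : Der (unitsAction τ)) (z : Multiplicative (ZMod b)),
        (e d : Multiplicative (ZMod b) → ZMod (p ^ k)) z =
          (d : Multiplicative (ZMod b) × Ostar n → ZMod (p ^ k)) (z, 1)) := by

  have hNe : NeZero (p ^ k) := ⟨pow_ne_zero k hp.ne_zero⟩
  have hp2' : Nat.Coprime 2 (p ^ k) :=
    Nat.Coprime.pow_right k ((Nat.coprime_primes Nat.prime_two hp).mpr (Ne.symm hp2))
  have hp3' : Nat.Coprime 3 (p ^ k) :=
    Nat.Coprime.pow_right k ((Nat.coprime_primes Nat.prime_three hp).mpr (Ne.symm hp3))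
  constructor
  · -- Tstar case
    refine der_iso_of_trivial γ hγ₂ ?_
    intro d t
    obtain ⟨ψ, hψ⟩ := exists_psi γ hγ₂ d
    rw [← hψ t]
    have h8 : ψ (SemidirectProduct.inl t.left) = 1 := by
      refine mult_eq_one_of_pow (m := 8) (by simpa using hp2'.pow_left 3) _ ?_
      have hq8 : ∀ q : Q8, q ^ 8 = 1 := by decide
      rw [← map_pow, ← map_pow, hq8, map_one, map_one]
    have h3 : ψ (SemidirectProduct.inr t.right) = 1 := by
      refine mult_eq_one_of_pow (m := 3 ^ n) (hp3'.pow_left n) _ ?_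
      have hz : t.right ^ (3 ^ n) = 1 := by
        apply Multiplicative.toAdd.injective
        rw [toAdd_pow, toAdd_one, nsmul_eq_mul, ZMod.natCast_self, zero_mul]
      rw [← map_pow, ← map_pow, hz, map_one, map_one]
    rw [← SemidirectProduct.inl_left_mul_inr_right t, map_mul, h8, h3, mul_one, toAdd_one]
  · -- Ostar case
    refine der_iso_of_trivial τ hτ₂ ?_
    intro d t
    obtain ⟨ψ, hψ⟩ := exists_psi τ hτ₂ d
    rw [← hψ t]
    have hrel : ∀ r ∈ ostarRels n, PresentedGroup.mk (ostarRels n) r = 1 := fun r hr =>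
      (QuotientGroup.eq_one_iff r).mpr (Subgroup.subset_normalClosure hr)
    have hX : (PresentedGroup.of (rels := ostarRels n) OGen.X) ^ 3 ^ n = 1 := by
      have := hrel _ (show FreeGroup.of OGen.X ^ 3 ^ n ∈ ostarRels n by
        simp [ostarRels])
      rwa [map_pow] at this
    have hP : (PresentedGroup.of (rels := ostarRels n) OGen.P) ^ 4 = 1 := by
      have := hrel _ (show FreeGroup.of OGen.P ^ 4 ∈ ostarRels n by
        simp [ostarRels])
      rwa [map_pow] at this
    have hPQ : (PresentedGroup.of (rels := ostarRels n) OGen.P) ^ 2 =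
        (PresentedGroup.of (rels := ostarRels n) OGen.Q) ^ 2 := by
      have := hrel _ (show FreeGroup.of OGen.P ^ 2 * (FreeGroup.of OGen.Q ^ 2)⁻¹ ∈ ostarRels n by
        simp [ostarRels])
      rw [map_mul, map_inv, map_pow, map_pow] at this
      exact mul_inv_eq_one.mp this
    have hQR : (PresentedGroup.of (rels := ostarRels n) OGen.Q) ^ 2 =
        (PresentedGroup.of (rels := ostarRels n) OGen.R) ^ 2 := by
      have := hrel _ (show FreeGroup.of OGen.Q ^ 2 * (FreeGroup.of OGen.R ^ 2)⁻¹ ∈ ostarRels n by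
        simp [ostarRels])
      rw [map_mul, map_inv, map_pow, map_pow] at this
      exact mul_inv_eq_one.mp this
    have hx1 : ψ (PresentedGroup.of OGen.X) = 1 :=
      mult_eq_one_of_pow (hp3'.pow_left n) _ (by rw [← map_pow, hX, map_one])
    have hp1 : ψ (PresentedGroup.of OGen.P) = 1 :=
      mult_eq_one_of_pow (m := 4) (by simpa using hp2'.pow_left 2) _
        (by rw [← map_pow, hP, map_one])
    have hq1 : ψ (PresentedGroup.of OGen.Q) = 1 :=
      mult_eq_one_of_pow (m := 2) hp2' _
        (by rw [← map_pow, ← hPQ, map_pow, hp1, one_pow])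
    have hr1 : ψ (PresentedGroup.of OGen.R) = 1 :=
      mult_eq_one_of_pow (m := 2) hp2' _
        (by rw [← map_pow, ← hQR, map_pow, hq1, one_pow])
    have hψ1 : ψ = 1 := PresentedGroup.ext fun x => by
      cases x <;> simp [hx1, hp1, hq1, hr1]
    rw [hψ1]
    rfl
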